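/- Let H be a real Hilbert space, let f₁, …, f_n : H → ℝ be differentiable functions with gradients ∇fᵢ, let y ∈ ℝⁿ, and let θ : ℝ → H be a differentiable curve satisfying the gradient-flow equation θ'(t) = −Σⱼ (fⱼ(θ(t)) − yⱼ) ∇fⱼ(θ(t)) for all t. Define uᵢ(t) = fᵢ(θ(t)) and H_{ij}(t) = ⟨∇fᵢ(θ(t)), ∇fⱼ(θ(t))⟩. Then each uᵢ is differentiable and uᵢ'(t) = −Σⱼ H_{ij}(t)(uⱼ(t) − yⱼ) for all t; that is, the output vector u(t) evolves as du/dt = −H(t)(u(t) − Y). -/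

import Mathlib

open scoped InnerProductSpace

/-- Training dynamics of network outputs under gradient flow of the squared loss:
if `θ'(t) = −Σⱼ (fⱼ(θ(t)) − yⱼ) ∇fⱼ(θ(t))`, then the outputs `uᵢ(t) = fᵢ(θ(t))`
satisfy `uᵢ'(t) = −Σⱼ H_{ij}(t)(uⱼ(t) − yⱼ)` with `H_{ij}(t) = ⟪∇fᵢ, ∇fⱼ⟫`. -/
theorem output_dynamics_gradient_flow
    {H : Type*} [NormedAddCommGroup H] [InnerProductSpace ℝ H] [CompleteSpace H]
    {n : ℕ} (f : Fin n → H → ℝ) (grad : Fin n → H → H)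
    (hgrad : ∀ i θ, HasGradientAt (f i) (grad i θ) θ)
    (y : Fin n → ℝ) (θ : ℝ → H)
    (hθ : ∀ t, HasDerivAt θ (-(∑ j, (f j (θ t) - y j) • grad j (θ t))) t) :
    ∀ i t, HasDerivAt (fun s => f i (θ s))
      (-(∑ j, ⟪grad i (θ t), grad j (θ t)⟫_ℝ * (f j (θ t) - y j))) t := by
  intro i t
  have hfd := (hgrad i (θ t)).hasFDerivAt
  have h := hfd.comp_hasDerivAt t (hθ t)
  refine h.congr_deriv ?_
  simp [InnerProductSpace.toDual_apply_apply, inner_neg_right, inner_sum, real_inner_smul_right, mul_comm]
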